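/- Let p be a prime with p ∤ a, p ∤ c, p | b, and p ∤ n. If c·n^n + a·(−a·(n−1))^{n−1} ≢ 0 (mod p), then the polynomial x^n + ā·x^{n−1} + c̄ ∈ 𝔽_p[x] is separable. -/

import Mathlib

open Polynomial

theorem stmt_7 (n : ℕ) (hn : 4 < n) (a b c : ℤ) (habc : a * b * c ≠ 0)
    (p : ℕ) [hp : Fact p.Prime]
    (hpa : ¬ (p : ℤ) ∣ a) (hpc : ¬ (p : ℤ) ∣ c) (hpb : (p : ℤ) ∣ b) (hpn : ¬ p ∣ n)
    (hsep : ¬ (p : ℤ) ∣ (c * (n : ℤ) ^ n + a * (-a * ((n : ℤ) - 1)) ^ (n - 1))) :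
    (X ^ n + C ((a : ZMod p)) * X ^ (n - 1) + C ((c : ZMod p)) : (ZMod p)[X]).Separable := by
  have hm0 : (n : ZMod p) ≠ 0 := by
    simpa [ZMod.natCast_eq_zero_iff] using hpn
  have hc0 : (c : ZMod p) ≠ 0 := by
    simpa [ZMod.intCast_zmod_eq_zero_iff_dvd] using hpc
  set m : ZMod p := (n : ZMod p) with hm
  set r : ZMod p := -(a : ZMod p) * (m - 1) / m with hr
  have hmr : m * r = -(a : ZMod p) * (m - 1) := by
    rw [hr, mul_div_assoc']; exact mul_div_cancel_left₀ _ hm0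
  set f : (ZMod p)[X] := X ^ n + C ((a : ZMod p)) * X ^ (n - 1) + C ((c : ZMod p)) with hf
  -- key evaluation facts
  have heval : ∀ x : ZMod p, f.eval x = x ^ n + (a : ZMod p) * x ^ (n - 1) + c := by
    intro x; simp [hf]
  have hkey : (c : ZMod p) * m ^ n + (a : ZMod p) * (-(a : ZMod p) * (m - 1)) ^ (n - 1) ≠ 0 := by
    intro h
    apply hsep
    rw [← ZMod.intCast_zmod_eq_zero_iff_dvd]
    push_cast
    rw [← hm]
    exact h
  have hroot : ¬ f.IsRoot r := by
    intro h
    have h' : r ^ n + (a : ZMod p) * r ^ (n - 1) + c = 0 := by rw [← heval r]; exact h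
    apply hkey
    have e1 : m ^ n * (r ^ n + (a : ZMod p) * r ^ (n - 1) + c)
        = (c : ZMod p) * m ^ n + (a : ZMod p) * (-(a : ZMod p) * (m - 1)) ^ (n - 1) := by
      obtain ⟨j, hj⟩ : ∃ j, n = j + 1 := ⟨n - 1, by omega⟩
      rw [hj]
      simp only [Nat.add_sub_cancel]
      have e2 : m ^ (j + 1) * (r ^ (j + 1) + (a : ZMod p) * r ^ j + c)
          = (m * r) ^ j * ((m * r) + (a : ZMod p) * m) + c * m ^ (j + 1) := by
        rw [mul_pow]; ring
      rw [e2, hmr]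
      have e3 : -(a : ZMod p) * (m - 1) + (a : ZMod p) * m = (a : ZMod p) := by ring
      rw [e3]
      ring
    rw [h', mul_zero] at e1
    exact e1.symm
  have hroot0 : ¬ f.IsRoot 0 := by
    intro h
    have h' : (0 : ZMod p) ^ n + (a : ZMod p) * (0 : ZMod p) ^ (n - 1) + c = 0 := by
      rw [← heval 0]; exact h
    rw [zero_pow (by omega : n ≠ 0), zero_pow (by omega : n - 1 ≠ 0)] at h'
    simp at h'
    exact hc0 h'
  -- the derivative factors
  obtain ⟨k, hk⟩ : ∃ k, n = k + 2 := ⟨n - 2, by omega⟩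
  have hm2 : m = ((k + 2 : ℕ) : ZMod p) := by rw [hm, hk]
  have hm1 : (a : ZMod p) * (m - 1) = (a : ZMod p) * ((k + 1 : ℕ) : ZMod p) := by
    rw [hm, hk]; push_cast; ring
  have hderiv : derivative f = C m * (X - C r) * X ^ k := by
    rw [hf, hk]
    rw [show (k + 2) - 1 = k + 1 from by omega]
    rw [derivative_add, derivative_add, derivative_C, derivative_C_mul,
      derivative_X_pow, derivative_X_pow]
    rw [show (k + 2) - 1 = k + 1 from by omega, show (k + 1) - 1 = k from by omega]
    have e4 : C m * (X - C r) * X ^ k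
        = C m * X ^ (k + 1) + C ((a : ZMod p) * (m - 1)) * X ^ k := by
      have e5 : (a : ZMod p) * (m - 1) = -(m * r) := by rw [hmr]; ring
      rw [e5, C_neg, C_mul]
      ring
    rw [e4, hm1, hm2, C_mul]
    push_cast
    ring
  rw [Polynomial.separable_def, hderiv]
  have h1 : IsCoprime f (C m) := ⟨0, C m⁻¹, by
    simp [← C_mul, inv_mul_cancel₀ hm0]⟩
  have h2 : IsCoprime f (X - C r) := by
    rw [isCoprime_comm]
    exact (irreducible_X_sub_C r).coprime_iff_not_dvd.2 (by
      rw [dvd_iff_isRoot]; exact hroot)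
  have h3 : IsCoprime f X := by
    rw [isCoprime_comm]
    refine (irreducible_X_sub_C (0 : ZMod p)).coprime_iff_not_dvd.2 ?_ |>.of_isCoprime_of_dvd_left ?_
    · rw [dvd_iff_isRoot]; exact hroot0
    · simp
  exact ((h1.mul_right h2).mul_right (h3.pow_right))
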